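/- In the small-separator Context-FTPL setup, fix a sequence (x^1,f^1),…,(x^T,f^T) of contexts x^τ ∈ 𝒳 and loss functions f^τ : {0,1}^K → ℝ. For each t, with the same perturbation draw, let π^t (respectively π^{t+1}) be the smallest (tie-breaking order) minimizer over π ∈ Π of Σ_{τ=1}^{t−1} f^τ(π(x^τ)) + Σ_{x ∈ X} ⟨π(x), ℓ_x⟩ (respectively the same sum including the term for τ = t). Then E[ f^t(π^t(x^t)) − f^t(π^{t+1}(x^t)) ] ≤ 4·ε·K·d·‖f^t‖_*², where the expectation is over the i.i.d. Laplace(ε) perturbation. (Lemma: Stability for small separator.) -/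

import Mathlib

open MeasureTheory Finset

/-- The i.i.d. product Laplace(ε) measure on `ι → ℝ`: density
`z ↦ ∏ i (ε/2)·exp(−ε|z i|)` with respect to Lebesgue measure. -/
noncomputable def laplacePi (ι : Type*) [Fintype ι] (ε : ℝ) :
    MeasureTheory.Measure (ι → ℝ) :=
  (MeasureTheory.volume : MeasureTheory.Measure (ι → ℝ)).withDensity
    fun z => ENNReal.ofReal (∏ i, ε / 2 * Real.exp (-ε * |z i|))

/-- `⟨a, v⟩` for `a ∈ {0,1}^K` (as a Boolean vector) and `v ∈ ℝ^K`. -/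
def dotp {K : ℕ} (a : Fin K → Bool) (v : Fin K → ℝ) : ℝ :=
  ∑ j, if a j then v j else 0

/-- `‖f‖_* = max_{a ∈ {0,1}^K} |f a|` for a loss function `f`. -/
noncomputable def dualNorm {K : ℕ} (f : (Fin K → Bool) → ℝ) : ℝ :=
  Finset.univ.sup' ⟨fun _ => false, Finset.mem_univ _⟩ fun a => |f a|

/-- The smallest (in the tie-breaking linear order) minimizer of `c` over the
finite nonempty policy set `P`. -/
noncomputable def argminTie {P : Type*} [Fintype P] [Nonempty P] [LinearOrder P]
    (c : P → ℝ) : P :=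
  haveI := Classical.decPred fun p : P => ∀ q, c p ≤ c q
  (Finset.univ.filter fun p : P => ∀ q, c p ≤ c q).min' (by
    obtain ⟨p, -, hp⟩ := Finset.exists_min_image (Finset.univ : Finset P) c
      ⟨Classical.arbitrary P, Finset.mem_univ _⟩
    exact ⟨p, Finset.mem_filter.mpr ⟨Finset.mem_univ _, fun q => hp q (Finset.mem_univ q)⟩⟩)


section AuxLemmas

universe u v

theorem argminTie_mem {P : Type*} [Fintype P] [Nonempty P] [LinearOrder P]
    (c : P → ℝ) : argminTie c ∈
      @Finset.filter P (fun p : P => ∀ q, c p ≤ c q)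
        (Classical.decPred fun p : P => ∀ q, c p ≤ c q) Finset.univ := by
  unfold argminTie
  exact Finset.min'_mem _ _

theorem argminTie_le {P : Type*} [Fintype P] [Nonempty P] [LinearOrder P]
    (c : P → ℝ) (q : P) : c (argminTie c) ≤ c q :=
  ((@Finset.mem_filter P _ (Classical.decPred fun p : P => ∀ q, c p ≤ c q) _).mp
    (argminTie_mem c)).2 q

theorem argminTie_le_of_min {P : Type*} [Fintype P] [Nonempty P] [LinearOrder P]
    (c : P → ℝ) (p : P) (hp : ∀ q, c p ≤ c q) : argminTie c ≤ p := by
  unfold argminTie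
  exact Finset.min'_le _ _
    ((@Finset.mem_filter P _ (Classical.decPred fun p : P => ∀ q, c p ≤ c q) _).mpr
      ⟨Finset.mem_univ _, hp⟩)

theorem argminTie_eq_iff {P : Type*} [Fintype P] [Nonempty P] [LinearOrder P]
    (c : P → ℝ) (p : P) :
    argminTie c = p ↔ (∀ q, c p ≤ c q) ∧ ∀ p', (∀ q, c p' ≤ c q) → p ≤ p' := by
  constructor
  · rintro rfl
    exact ⟨argminTie_le c, fun p' hp' => argminTie_le_of_min c p' hp'⟩
  · rintro ⟨h1, h2⟩
    exact le_antisymm (argminTie_le_of_min c p h1) (h2 _ (argminTie_le c))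

theorem measurableSet_argminTie_eq {α : Type*} [MeasurableSpace α]
    {P : Type*} [Fintype P] [Nonempty P] [LinearOrder P]
    (c : α → P → ℝ) (hc : ∀ p, Measurable fun z => c z p) (p : P) :
    MeasurableSet {z | argminTie (c z) = p} := by
  have : {z | argminTie (c z) = p} =
      (⋂ q, {z | c z p ≤ c z q}) ∩
        ⋂ p', {z | (∀ q, c z p' ≤ c z q) → p ≤ p'} := by
    ext z
    simp only [Set.mem_setOf_eq, Set.mem_inter_iff, Set.mem_iInter, argminTie_eq_iff]
  rw [this]
  refine MeasurableSet.inter (MeasurableSet.iInter fun q => measurableSet_le (hc p) (hc q))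
    (MeasurableSet.iInter fun p' => ?_)
  by_cases hpp : p ≤ p'
  · have : {z | (∀ q, c z p' ≤ c z q) → p ≤ p'} = Set.univ := by
      ext z; simp [hpp]
    rw [this]; exact MeasurableSet.univ
  · have : {z | (∀ q, c z p' ≤ c z q) → p ≤ p'} = (⋂ q, {z | c z p' ≤ c z q})ᶜ := by
      ext z; simp only [Set.mem_setOf_eq, Set.mem_compl_iff, Set.mem_iInter]
      constructor
      · intro h hall; exact hpp (h hall)
      · intro h hall; exact absurd hall h
    rw [this]
    exact (MeasurableSet.iInter fun q => measurableSet_le (hc p') (hc q)).compl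

theorem argminTie_bool_true {P : Type*} [Fintype P] [Nonempty P] [LinearOrder P]
    (a : P → ℝ) (b : P → Bool) (s : ℝ) (p1 : P) (h1 : b p1 = true)
    (hs : ∀ p0, b p0 = false → a p1 + s < a p0) :
    b (argminTie fun p => a p + s * (if b p then 1 else 0)) = true := by
  set c : P → ℝ := fun p => a p + s * (if b p then 1 else 0) with hcdef
  by_contra hq
  have hq' : b (argminTie c) = false := by
    cases hb : b (argminTie c)
    · rfl
    · exact absurd hb hq
  have h1' : c (argminTie c) ≤ c p1 := argminTie_le c p1
  have e1 : c p1 = a p1 + s := by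
    show a p1 + s * (if b p1 then 1 else 0) = a p1 + s
    rw [h1]; norm_num
  have e2 : c (argminTie c) = a (argminTie c) := by
    show a (argminTie c) + s * (if b (argminTie c) then 1 else 0) = a (argminTie c)
    rw [hq']; norm_num
  have := hs _ hq'
  rw [e1, e2] at h1'
  linarith

theorem argminTie_bool_false {P : Type*} [Fintype P] [Nonempty P] [LinearOrder P]
    (a : P → ℝ) (b : P → Bool) (s : ℝ) (p0 : P) (h0 : b p0 = false)
    (hs : ∀ p1, b p1 = true → a p0 < a p1 + s) :
    b (argminTie fun p => a p + s * (if b p then 1 else 0)) = false := by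
  set c : P → ℝ := fun p => a p + s * (if b p then 1 else 0) with hcdef
  by_contra hq
  have hq' : b (argminTie c) = true := by
    cases hb : b (argminTie c)
    · exact absurd hb hq
    · rfl
  have h1' : c (argminTie c) ≤ c p0 := argminTie_le c p0
  have e1 : c p0 = a p0 := by
    show a p0 + s * (if b p0 then 1 else 0) = a p0
    rw [h0]; norm_num
  have e2 : c (argminTie c) = a (argminTie c) + s := by
    show a (argminTie c) + s * (if b (argminTie c) then 1 else 0) = a (argminTie c) + s
    rw [hq']; norm_num
  have := hs _ hq'
  rw [e1, e2] at h1'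
  linarith

theorem abs_inf'_add_sub {P : Type*} [LinearOrder P] {S : Finset P} (hS : S.Nonempty)
    (a h : P → ℝ) (F : ℝ) (hh : ∀ p ∈ S, |h p| ≤ F) :
    |S.inf' hS (fun p => a p + h p) - S.inf' hS a| ≤ F := by
  rw [abs_le]
  obtain ⟨p1, hp1, e1⟩ := Finset.exists_mem_eq_inf' hS a
  obtain ⟨p2, hp2, e2⟩ := Finset.exists_mem_eq_inf' hS (fun p => a p + h p)
  constructor
  · have h1 : S.inf' hS a ≤ a p2 := Finset.inf'_le _ hp2
    have h2 := (abs_le.mp (hh p2 hp2)).1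
    rw [e2]; linarith
  · have h1 : S.inf' hS (fun p => a p + h p) ≤ a p1 + h p1 := Finset.inf'_le _ hp1
    have h2 := (abs_le.mp (hh p1 hp1)).2
    rw [e1]; linarith

theorem lintegral_pi_fin_prod : ∀ {n : ℕ} {α : Fin n → Type u} [∀ i, MeasurableSpace (α i)]
    (μ : ∀ i, Measure (α i)) [∀ i, SigmaFinite (μ i)]
    (f : ∀ i, α i → ENNReal) (_ : ∀ i, Measurable (f i)),
    ∫⁻ x, ∏ i, f i (x i) ∂Measure.pi μ = ∏ i, ∫⁻ x, f i x ∂μ i := by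
  intro n
  induction n with
  | zero =>
    intro α _ μ _ f hf
    simp only [Finset.univ_eq_empty, Finset.prod_empty, lintegral_const, one_mul,
      MeasureTheory.Measure.pi_empty_univ]
  | succ n ih =>
    intro α _ μ _ f hf
    have hmp := (MeasureTheory.measurePreserving_piFinSuccAbove μ 0).symm
    rw [← hmp.lintegral_comp (f := fun x => ∏ i, f i (x i))
      (Finset.measurable_prod _ fun i _ => (hf i).comp (measurable_pi_apply i))]
    have : ∀ (y : α 0 × ∀ j : Fin n, α (Fin.succ j)),
        (∏ i, f i (((MeasurableEquiv.piFinSuccAbove α 0).symm y) i)) =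
          f 0 y.1 * ∏ j : Fin n, f (Fin.succ j) (y.2 j) := by
      intro y
      rw [Fin.prod_univ_succ]
      congr 1
      all_goals simp [MeasurableEquiv.piFinSuccAbove_symm_apply, Fin.zero_succAbove]
    rw [lintegral_congr (μ := (μ 0).prod (Measure.pi fun j => μ (Fin.succAbove 0 j))) fun y => this y]
    show ∫⁻ y : α 0 × (∀ j : Fin n, α (Fin.succ j)), f 0 y.1 * ∏ j : Fin n, f (Fin.succ j) (y.2 j)
      ∂((μ 0).prod (Measure.pi fun j => μ (Fin.succ j))) = _
    rw [MeasureTheory.lintegral_prod_mul (f := f 0)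
      (g := fun y : ∀ j : Fin n, α (Fin.succ j) => ∏ j : Fin n, f (Fin.succ j) (y j))
      (hf 0).aemeasurable
      (Finset.measurable_prod _ (fun j _ => (hf (Fin.succ j)).comp (measurable_pi_apply j))).aemeasurable]
    rw [ih (fun j => μ (Fin.succ j)) (fun j => f (Fin.succ j)) (fun j => hf (Fin.succ j))]
    rw [Fin.prod_univ_succ]

theorem lintegral_pi_prod {ι : Type u} [Fintype ι] {α : Type v} [MeasurableSpace α]
    (μ : Measure α) [SigmaFinite μ] (f : ι → α → ENNReal) (hf : ∀ i, Measurable (f i)) :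
    ∫⁻ x : ι → α, ∏ i, f i (x i) ∂Measure.pi (fun _ => μ) = ∏ i, ∫⁻ x, f i x ∂μ := by
  classical
  let e := (Fintype.equivFin ι).symm
  have hmp := MeasureTheory.measurePreserving_piCongrLeft (fun _ : ι => μ) e
  rw [← hmp.lintegral_comp (f := fun x => ∏ i, f i (x i))
    (Finset.measurable_prod _ fun i _ => (hf i).comp (measurable_pi_apply i))]
  have : ∀ (y : Fin (Fintype.card ι) → α),
      (∏ i, f i ((MeasurableEquiv.piCongrLeft (fun _ : ι => α) e) y i)) =
        ∏ i', f (e i') (y i') := by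
    intro y
    rw [← e.prod_comp]
    refine Finset.prod_congr rfl fun i' _ => ?_
    congr 1
    simp [MeasurableEquiv.coe_piCongrLeft, Equiv.piCongrLeft_apply_apply]
  simp_rw [this]
  rw [lintegral_pi_fin_prod (fun _ => μ) (fun i' => f (e i')) (fun i' => hf (e i'))]
  exact e.prod_comp fun i => ∫⁻ x, f i x ∂μ

theorem pi_withDensity_eq {ι : Type u} [Fintype ι] {α : Type v} [MeasurableSpace α]
    (μ : Measure α) [SigmaFinite μ] (f : ι → α → ENNReal) (hf : ∀ i, Measurable (f i))
    [∀ i : ι, SigmaFinite (μ.withDensity (f i))] :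
    Measure.pi (fun i => μ.withDensity (f i)) =
      (Measure.pi fun _ : ι => μ).withDensity (fun x => ∏ i, f i (x i)) := by
  refine Measure.pi_eq fun s hs => ?_
  rw [MeasureTheory.withDensity_apply _ (MeasurableSet.univ_pi hs)]
  rw [← MeasureTheory.lintegral_indicator (MeasurableSet.univ_pi hs)]
  have key : ∀ x : ι → α, Set.indicator (Set.pi Set.univ s) (fun x => ∏ i, f i (x i)) x =
      ∏ i, Set.indicator (s i) (f i) (x i) := by
    intro x
    by_cases hx : x ∈ Set.pi Set.univ s
    · rw [Set.indicator_of_mem hx]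
      exact Finset.prod_congr rfl fun i _ =>
        (Set.indicator_of_mem (hx i (Set.mem_univ i)) _).symm
    · rw [Set.indicator_of_notMem hx]
      have : ∃ i, x i ∉ s i := by
        by_contra h
        push_neg at h
        exact hx fun i _ => h i
      obtain ⟨i, hi⟩ := this
      exact (Finset.prod_eq_zero (Finset.mem_univ i)
        (Set.indicator_of_notMem hi _)).symm
  simp_rw [key]
  rw [lintegral_pi_prod μ (fun i => Set.indicator (s i) (f i))
    (fun i => (hf i).indicator (hs i))]
  exact Finset.prod_congr rfl fun i _ => by
    rw [MeasureTheory.lintegral_indicator (hs i),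
      MeasureTheory.withDensity_apply _ (hs i)]

noncomputable def lapm (ε : ℝ) : Measure ℝ :=
  MeasureTheory.volume.withDensity fun x => ENNReal.ofReal (ε / 2 * Real.exp (-ε * |x|))

theorem lapm_density_measurable (ε : ℝ) :
    Measurable fun x : ℝ => ENNReal.ofReal (ε / 2 * Real.exp (-ε * |x|)) := by
  apply Measurable.ennreal_ofReal
  exact (continuous_const.mul ((Real.continuous_exp.comp
    (continuous_const.mul continuous_abs)))).measurable

theorem lapm_univ {ε : ℝ} (hε : 0 < ε) : lapm ε Set.univ = 1 := by
  have hm : Measurable fun x : ℝ => ProbabilityTheory.exponentialPDF ε x :=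
    (ProbabilityTheory.measurable_exponentialPDFReal ε).ennreal_ofReal
  have two_half : ∀ c : ℝ, (2 : ENNReal)⁻¹ * ENNReal.ofReal (ε * c) =
      ENNReal.ofReal (ε / 2 * c) := by
    intro c
    rw [show (ε * c : ℝ) = 2 * (ε / 2 * c) from by ring,
      ENNReal.ofReal_mul (by norm_num : (0:ℝ) ≤ 2)]
    rw [show ENNReal.ofReal (2:ℝ) = 2 from by norm_num, ← mul_assoc,
      ENNReal.inv_mul_cancel two_ne_zero ENNReal.ofNat_ne_top, one_mul]
  rw [lapm, MeasureTheory.withDensity_apply _ MeasurableSet.univ,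
    MeasureTheory.setLIntegral_univ]
  have key : ∀ x : ℝ, x ≠ 0 → ENNReal.ofReal (ε / 2 * Real.exp (-ε * |x|)) =
      (2 : ENNReal)⁻¹ * (ProbabilityTheory.exponentialPDF ε x +
        ProbabilityTheory.exponentialPDF ε (-x)) := by
    intro x hx0
    rcases lt_or_gt_of_ne hx0 with hx | hx
    · rw [ProbabilityTheory.exponentialPDF_of_neg hx,
        ProbabilityTheory.exponentialPDF_of_nonneg (by linarith : (0:ℝ) ≤ -x),
        zero_add, abs_of_neg hx, two_half]
      congr 2
      ring_nf
    · rw [ProbabilityTheory.exponentialPDF_of_neg (by linarith : -x < 0),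
        ProbabilityTheory.exponentialPDF_of_nonneg hx.le,
        add_zero, abs_of_pos hx, two_half]
      congr 2
      ring_nf
  have hae : ∀ᵐ x : ℝ ∂volume, ENNReal.ofReal (ε / 2 * Real.exp (-ε * |x|)) =
      (2 : ENNReal)⁻¹ * (ProbabilityTheory.exponentialPDF ε x +
        ProbabilityTheory.exponentialPDF ε (-x)) := by
    have h0 : ∀ᵐ x : ℝ ∂volume, x ≠ 0 := by
      rw [MeasureTheory.ae_iff]
      simp only [ne_eq, not_not, Set.setOf_eq_eq_singleton]
      exact Real.volume_singleton
    exact h0.mono fun x hx => key x hx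
  rw [MeasureTheory.lintegral_congr_ae hae]
  have hm2 : Measurable fun x : ℝ => ProbabilityTheory.exponentialPDF ε x +
      ProbabilityTheory.exponentialPDF ε (-x) := hm.add (hm.comp measurable_neg)
  rw [MeasureTheory.lintegral_const_mul _ hm2]
  rw [MeasureTheory.lintegral_add_left hm]
  have hneg : ∫⁻ x : ℝ, ProbabilityTheory.exponentialPDF ε (-x) =
      ∫⁻ x : ℝ, ProbabilityTheory.exponentialPDF ε x :=
    (Measure.measurePreserving_neg (volume : Measure ℝ)).lintegral_comp hm
  rw [hneg, ProbabilityTheory.lintegral_exponentialPDF_eq_one hε]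
  rw [show (1 : ENNReal) + 1 = 2 from by norm_num,
    ENNReal.inv_mul_cancel two_ne_zero ENNReal.ofNat_ne_top]

theorem lapm_Icc_le {ε : ℝ} (hε : 0 < ε) (a b : ℝ) :
    lapm ε (Set.Icc a b) ≤ ENNReal.ofReal (ε / 2 * (b - a)) := by
  rw [lapm, MeasureTheory.withDensity_apply _ measurableSet_Icc]
  calc ∫⁻ x in Set.Icc a b, ENNReal.ofReal (ε / 2 * Real.exp (-ε * |x|)) ∂volume
      ≤ ∫⁻ _ in Set.Icc a b, ENNReal.ofReal (ε / 2) ∂volume := by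
        refine MeasureTheory.setLIntegral_mono (by fun_prop) fun x _ => ?_
        refine ENNReal.ofReal_le_ofReal ?_
        nlinarith [Real.exp_le_one_iff.mpr (by nlinarith [abs_nonneg x] : -ε * |x| ≤ 0),
          Real.exp_pos (-ε * |x|)]
    _ = ENNReal.ofReal (ε / 2) * volume (Set.Icc a b) := by
        rw [MeasureTheory.setLIntegral_const]
    _ ≤ ENNReal.ofReal (ε / 2 * (b - a)) := by
        rw [Real.volume_Icc, ← ENNReal.ofReal_mul (by positivity)]

theorem pi_measure_strip_bound {ι : Type u} [Fintype ι] [DecidableEq ι]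
    (ν : Measure ℝ) [IsProbabilityMeasure ν] (i : ι)
    (D : Set (ι → ℝ)) (hD : MeasurableSet D)
    (l uu : (ι → ℝ) → ℝ)
    (hl : ∀ z s, l (Function.update z i s) = l z)
    (hu : ∀ z s, uu (Function.update z i s) = uu z)
    (hsub : ∀ z ∈ D, z i ∈ Set.Icc (l z) (uu z))
    (C : ENNReal) (hC : ∀ z, ν (Set.Icc (l z) (uu z)) ≤ C) :
    Measure.pi (fun _ : ι => ν) D ≤ C := by
  classical
  set p : ι → Prop := fun w => w ≠ i with hp
  haveI : DecidablePred p := fun w => instDecidableNot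
  set e := MeasurableEquiv.piEquivPiSubtypeProd (fun _ : ι => ℝ) p with he
  have hmp := MeasureTheory.measurePreserving_piEquivPiSubtypeProd (fun _ : ι => ν) p
  have hDeq : D = e ⁻¹' (e.symm ⁻¹' D) := by
    ext z; simp
  have hS : MeasurableSet (e.symm ⁻¹' D) := e.symm.measurable hD
  rw [hDeq, hmp.measure_preimage hS.nullMeasurableSet]
  rw [MeasureTheory.Measure.prod_apply hS]
  -- the "singleton" coordinate
  haveI hui : Unique {w // ¬ p w} := by
    refine ⟨⟨⟨i, by simp [hp]⟩⟩, ?_⟩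
    rintro ⟨w, hw⟩
    simp only [hp, ne_eq, not_not] at hw
    exact Subtype.ext hw
  set i' : {w // ¬ p w} := ⟨i, by simp [hp]⟩ with hi'
  -- reconstruct: e.symm (x, y) = update (e.symm (x, fun _ => 0)) i (y i')
  have hrec : ∀ (x : {w // p w} → ℝ) (y : {w // ¬ p w} → ℝ),
      e.symm (x, y) = Function.update (e.symm (x, fun _ => 0)) i (y i') := by
    intro x y
    funext w
    by_cases hw : p w
    · rw [Function.update_of_ne hw]
      simp only [he, MeasurableEquiv.piEquivPiSubtypeProd, Equiv.piEquivPiSubtypeProd,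
        MeasurableEquiv.symm_mk, MeasurableEquiv.coe_mk, Equiv.coe_fn_symm_mk]
      rw [dif_pos hw, dif_pos hw]
    · have hwi : w = i := not_not.mp hw
      subst hwi
      rw [Function.update_self]
      simp [he, MeasurableEquiv.piEquivPiSubtypeProd, Equiv.piEquivPiSubtypeProd, hw, hi']
  calc ∫⁻ x, (Measure.pi fun _ : {w // ¬ p w} => ν) (Prod.mk x ⁻¹' (e.symm ⁻¹' D))
        ∂(Measure.pi fun _ : {w // p w} => ν)
      ≤ ∫⁻ _, C ∂(Measure.pi fun _ : {w // p w} => ν) := by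
        refine MeasureTheory.lintegral_mono fun x => ?_
        set z0 : ι → ℝ := e.symm (x, fun _ => 0) with hz0
        have hslice : (Prod.mk x ⁻¹' (e.symm ⁻¹' D)) ⊆
            (fun y : {w // ¬ p w} → ℝ => y i') ⁻¹' Set.Icc (l z0) (uu z0) := by
          intro y hy
          have hzD : e.symm (x, y) ∈ D := hy
          have hz : e.symm (x, y) = Function.update z0 i (y i') := hrec x y
          have h1 := hsub _ hzD
          rw [hz] at h1
          rw [hl z0 (y i'), hu z0 (y i'), Function.update_self] at h1
          exact h1
        refine le_trans (measure_mono hslice) ?_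
        have hset : (fun y : {w // ¬ p w} → ℝ => y i') ⁻¹' Set.Icc (l z0) (uu z0) =
            Set.pi Set.univ (fun _ : {w // ¬ p w} => Set.Icc (l z0) (uu z0)) := by
          ext y
          constructor
          · intro hy w _
            have hw : w = i' := Subsingleton.elim w i'
            rw [hw]; exact hy
          · intro hy; exact hy i' (Set.mem_univ _)
        rw [hset, MeasureTheory.Measure.pi_pi]
        rw [Finset.prod_eq_single_of_mem i' (Finset.mem_univ _)
          (fun b _ hb => absurd (Subsingleton.elim b i') hb)]
        exact hC z0
    _ = C := by
        rw [MeasureTheory.lintegral_const]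
        simp


end AuxLemmas

/-- **Stability for small separator.** `𝒳` is an arbitrary context set, `P`
the finite set of `N ≥ 2` policies (with tie-breaking linear order), each
choosing at most `m` of the `K` coordinates, and `Xs ⊆ 𝒳` is a separator of
size `d`: any two distinct policies differ on some context of `Xs`.  The
perturbation places i.i.d. Laplace(ε) losses on the contexts of `Xs`.  For any
sequence of contexts and loss functions and any round `t < T`,
`E[f^t(π^t(x^t)) − f^t(π^{t+1}(x^t))] ≤ 4·ε·K·d·‖f^t‖_*²`. -/
theorem small_separator_stability
    {𝒳 : Type*} {P : Type*} [Fintype P] [Nonempty P] [LinearOrder P]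
    {K m d N : ℕ} (hK : 1 ≤ K) (hm : 1 ≤ m)
    (Xs : Finset 𝒳) (hd : Xs.card = d)
    (hN : Fintype.card P = N) (hN2 : 2 ≤ N)
    (pol : P → 𝒳 → Fin K → Bool)
    (hsparse : ∀ p x, (Finset.univ.filter fun j => pol p x j = true).card ≤ m)
    (hsep : ∀ p q : P, p ≠ q → ∃ x ∈ Xs, pol p x ≠ pol q x)
    {ε : ℝ} (hε : 0 < ε)
    (T : ℕ) (xs : ℕ → 𝒳) (f : ℕ → (Fin K → Bool) → ℝ) (t : ℕ) (ht : t < T) :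
    (∫ z, (f t (pol (argminTie fun p : P =>
            (∑ τ ∈ Finset.range t, f τ (pol p (xs τ))) +
              ∑ xc : {x // x ∈ Xs}, dotp (pol p ↑xc) fun j => z (xc, j)) (xs t)) -
          f t (pol (argminTie fun p : P =>
            (∑ τ ∈ Finset.range (t + 1), f τ (pol p (xs τ))) +
              ∑ xc : {x // x ∈ Xs}, dotp (pol p ↑xc) fun j => z (xc, j)) (xs t)))
        ∂(laplacePi ({x // x ∈ Xs} × Fin K) ε)) ≤
      4 * ε * (K : ℝ) * (d : ℝ) * dualNorm (f t) ^ 2 := by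
  classical
  haveI : IsProbabilityMeasure (lapm ε) := ⟨lapm_univ hε⟩
  set F := dualNorm (f t) with hF
  have hFb : ∀ a, |f t a| ≤ F := by
    intro a
    rw [hF, dualNorm]
    exact Finset.le_sup' (fun a => |f t a|) (Finset.mem_univ a)
  have hF0 : (0:ℝ) ≤ F := le_trans (abs_nonneg _) (hFb fun _ => false)
  set c1 : (({x // x ∈ Xs} × Fin K) → ℝ) → P → ℝ := fun z p =>
      (∑ τ ∈ Finset.range t, f τ (pol p (xs τ))) +
        ∑ xc : {x // x ∈ Xs}, dotp (pol p ↑xc) fun j => z (xc, j) with hc1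
  set c2 : (({x // x ∈ Xs} × Fin K) → ℝ) → P → ℝ := fun z p =>
      (∑ τ ∈ Finset.range (t + 1), f τ (pol p (xs τ))) +
        ∑ xc : {x // x ∈ Xs}, dotp (pol p ↑xc) fun j => z (xc, j) with hc2
  set B : (({x // x ∈ Xs} × Fin K) → ℝ) → P := fun z => argminTie (c1 z) with hB
  set A : (({x // x ∈ Xs} × Fin K) → ℝ) → P := fun z => argminTie (c2 z) with hA
  -- linear representation of the perturbation part
  have hlin : ∀ (z : ({x // x ∈ Xs} × Fin K) → ℝ) (p : P),
      (∑ xc : {x // x ∈ Xs}, dotp (pol p ↑xc) fun j => z (xc, j)) =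
        ∑ w : {x // x ∈ Xs} × Fin K, if pol p ↑w.1 w.2 then z w else 0 := by
    intro z p
    rw [Fintype.sum_prod_type]
    exact Finset.sum_congr rfl fun xc _ => rfl
  have hc21 : ∀ z p, c2 z p = c1 z p + f t (pol p (xs t)) := by
    intro z p
    simp only [hc1, hc2, Finset.sum_range_succ]
    ring
  have hupd1 : ∀ (z : ({x // x ∈ Xs} × Fin K) → ℝ) (i : {x // x ∈ Xs} × Fin K) (s : ℝ) (p : P),
      c1 (Function.update z i s) p =
        c1 z p + (s - z i) * (if pol p ↑i.1 i.2 then 1 else 0) := by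
    intro z i s p
    simp only [hc1]
    rw [hlin, hlin]
    have key : ∀ w : {x // x ∈ Xs} × Fin K,
        (if pol p ↑w.1 w.2 then Function.update z i s w else 0) =
          (if pol p ↑w.1 w.2 then z w else 0) +
            (if w = i then (s - z i) * (if pol p ↑i.1 i.2 then 1 else 0) else 0) := by
      intro w
      by_cases hw : w = i
      · subst hw
        rw [if_pos rfl, Function.update_self]
        by_cases hb : pol p ↑w.1 w.2
        · rw [if_pos hb, if_pos hb, if_pos hb]; ring
        · rw [if_neg hb, if_neg hb, if_neg hb]; ring
      · rw [Function.update_of_ne hw, if_neg hw, add_zero]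
    rw [Finset.sum_congr rfl fun w _ => key w, Finset.sum_add_distrib,
      Finset.sum_ite_eq' Finset.univ i, if_pos (Finset.mem_univ i)]
    ring
  have hupd2 : ∀ (z : ({x // x ∈ Xs} × Fin K) → ℝ) (i : {x // x ∈ Xs} × Fin K) (s : ℝ) (p : P),
      c2 (Function.update z i s) p =
        c2 z p + (s - z i) * (if pol p ↑i.1 i.2 then 1 else 0) := by
    intro z i s p
    rw [hc21, hc21, hupd1]
    ring
  -- measurability of costs
  have hm1 : ∀ p, Measurable fun z : ({x // x ∈ Xs} × Fin K) → ℝ => c1 z p := by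
    intro p
    have : (fun z : ({x // x ∈ Xs} × Fin K) → ℝ => c1 z p) = fun z =>
        (∑ τ ∈ Finset.range t, f τ (pol p (xs τ))) +
          ∑ w : {x // x ∈ Xs} × Fin K, if pol p ↑w.1 w.2 then z w else 0 := by
      funext z; rw [hc1]; simp only; rw [hlin]
    rw [this]
    refine Measurable.const_add ?_ _
    refine Finset.measurable_sum _ fun w _ => ?_
    by_cases hb : pol p ↑w.1 w.2
    · simpa [hb] using measurable_pi_apply w
    · simpa [hb] using measurable_const
  have hm2 : ∀ p, Measurable fun z : ({x // x ∈ Xs} × Fin K) → ℝ => c2 z p := by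
    intro p
    have : (fun z : ({x // x ∈ Xs} × Fin K) → ℝ => c2 z p) =
        fun z => c1 z p + f t (pol p (xs t)) := funext fun z => hc21 z p
    rw [this]
    exact (hm1 p).add_const _
  have hmB : ∀ p, MeasurableSet {z : ({x // x ∈ Xs} × Fin K) → ℝ | B z = p} := fun p =>
    measurableSet_argminTie_eq c1 hm1 p
  have hmA : ∀ p, MeasurableSet {z : ({x // x ∈ Xs} × Fin K) → ℝ | A z = p} := fun p =>
    measurableSet_argminTie_eq c2 hm2 p
  -- the disagreement sets
  set D : ({x // x ∈ Xs} × Fin K) → Set (({x // x ∈ Xs} × Fin K) → ℝ) := fun i =>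
    {z | pol (B z) ↑i.1 i.2 ≠ pol (A z) ↑i.1 i.2} with hD
  have hDm : ∀ i, MeasurableSet (D i) := by
    intro i
    have : D i = ⋃ (p : P) (q : P) (_ : pol p ↑i.1 i.2 ≠ pol q ↑i.1 i.2),
        ({z | B z = p} ∩ {z | A z = q}) := by
      ext z
      simp only [hD, Set.mem_setOf_eq, Set.mem_iUnion, Set.mem_inter_iff]
      constructor
      · intro hz; exact ⟨B z, A z, hz, rfl, rfl⟩
      · rintro ⟨p, q, hpq, h1, h2⟩
        rw [h1, h2]; exact hpq
    rw [this]
    exact MeasurableSet.iUnion fun p => MeasurableSet.iUnion fun q =>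
      MeasurableSet.iUnion fun _ => (hmB p).inter (hmA q)
  -- the per-coordinate measure bound
  have hmeas_bound : ∀ i, (Measure.pi fun _ : ({x // x ∈ Xs} × Fin K) => lapm ε) (D i) ≤
      ENNReal.ofReal (ε * F) := by
    intro i
    by_cases hcase1 : ∃ p1 : P, pol p1 ↑i.1 i.2 = true
    swap
    · push_neg at hcase1
      have hall : ∀ p : P, pol p ↑i.1 i.2 = false := fun p =>
        Bool.eq_false_iff.mpr (hcase1 p)
      have hDi : D i = ∅ := by
        ext z
        simp only [hD, Set.mem_setOf_eq, Set.mem_empty_iff_false, iff_false, not_not, ne_eq]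
        rw [hall (B z), hall (A z)]
      rw [hDi]
      simp
    by_cases hcase0 : ∃ p0 : P, pol p0 ↑i.1 i.2 = false
    swap
    · push_neg at hcase0
      have hall : ∀ p : P, pol p ↑i.1 i.2 = true := fun p =>
        Bool.ne_false_iff.mp (hcase0 p)
      have hDi : D i = ∅ := by
        ext z
        simp only [hD, Set.mem_setOf_eq, Set.mem_empty_iff_false, iff_false, not_not, ne_eq]
        rw [hall (B z), hall (A z)]
      rw [hDi]
      simp
    obtain ⟨p1, hp1⟩ := hcase1
    obtain ⟨p0, hp0⟩ := hcase0
    set S1 : Finset P := Finset.univ.filter (fun p => pol p ↑i.1 i.2 = true) with hS1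
    set S0 : Finset P := Finset.univ.filter (fun p => pol p ↑i.1 i.2 = false) with hS0
    have hS1ne : S1.Nonempty := ⟨p1, by simp [hS1, hp1]⟩
    have hS0ne : S0.Nonempty := ⟨p0, by simp [hS0, hp0]⟩
    set a1 : (({x // x ∈ Xs} × Fin K) → ℝ) → P → ℝ := fun z p =>
      c1 z p - z i * (if pol p ↑i.1 i.2 then 1 else 0) with ha1
    set a2 : (({x // x ∈ Xs} × Fin K) → ℝ) → P → ℝ := fun z p =>
      c2 z p - z i * (if pol p ↑i.1 i.2 then 1 else 0) with ha2
    have ha1u : ∀ z s, a1 (Function.update z i s) = a1 z := by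
      intro z s
      funext p
      simp only [ha1]
      rw [hupd1, Function.update_self]
      ring
    have ha2u : ∀ z s, a2 (Function.update z i s) = a2 z := by
      intro z s
      funext p
      simp only [ha2]
      rw [hupd2, Function.update_self]
      ring
    set th1 : (({x // x ∈ Xs} × Fin K) → ℝ) → ℝ := fun z =>
      S0.inf' hS0ne (a1 z) - S1.inf' hS1ne (a1 z) with hth1
    set th2 : (({x // x ∈ Xs} × Fin K) → ℝ) → ℝ := fun z =>
      S0.inf' hS0ne (a2 z) - S1.inf' hS1ne (a2 z) with hth2
    have hth1u : ∀ z s, th1 (Function.update z i s) = th1 z := by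
      intro z s
      simp only [hth1]
      rw [ha1u]
    have hth2u : ∀ z s, th2 (Function.update z i s) = th2 z := by
      intro z s
      simp only [hth2]
      rw [ha2u]
    have ha21 : ∀ z p, a2 z p = a1 z p + f t (pol p (xs t)) := by
      intro z p
      simp only [ha1, ha2]
      rw [hc21]
      ring
    have hthdiff : ∀ z, |th2 z - th1 z| ≤ 2 * F := by
      intro z
      have h0 : |S0.inf' hS0ne (a2 z) - S0.inf' hS0ne (a1 z)| ≤ F := by
        have h := abs_inf'_add_sub hS0ne (a1 z) (fun p => f t (pol p (xs t))) F
          (fun p _ => hFb _)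
        have heq : S0.inf' hS0ne (fun p => a1 z p + f t (pol p (xs t))) =
            S0.inf' hS0ne (a2 z) := by
          congr 1
          funext p
          rw [ha21]
        rwa [heq] at h
      have h1 : |S1.inf' hS1ne (a2 z) - S1.inf' hS1ne (a1 z)| ≤ F := by
        have h := abs_inf'_add_sub hS1ne (a1 z) (fun p => f t (pol p (xs t))) F
          (fun p _ => hFb _)
        have heq : S1.inf' hS1ne (fun p => a1 z p + f t (pol p (xs t))) =
            S1.inf' hS1ne (a2 z) := by
          congr 1
          funext p
          rw [ha21]
        rwa [heq] at h
      simp only [hth1, hth2]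
      rw [abs_le] at h0 h1 ⊢
      constructor <;> [linarith [h0.1, h1.2]; linarith [h0.2, h1.1]]
    have hbB_true : ∀ z, z i < th1 z → pol (B z) ↑i.1 i.2 = true := by
      intro z hlt
      have hBrw : B z = argminTie (fun p => a1 z p +
          z i * (if pol p ↑i.1 i.2 then 1 else 0)) := by
        rw [hB]
        simp only
        congr 1
        funext p
        simp only [ha1]
        ring
      rw [hBrw]
      obtain ⟨q1, hq1mem, hq1eq⟩ := Finset.exists_mem_eq_inf' hS1ne (a1 z)
      have hq1b : pol q1 ↑i.1 i.2 = true := by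
        have := Finset.mem_filter.mp (hS1 ▸ hq1mem)
        exact this.2
      refine argminTie_bool_true (a1 z) (fun p => pol p ↑i.1 i.2) (z i) q1 hq1b ?_
      intro q0 hq0
      have h2 : S0.inf' hS0ne (a1 z) ≤ a1 z q0 :=
        Finset.inf'_le _ (by rw [hS0]; exact Finset.mem_filter.mpr ⟨Finset.mem_univ _, hq0⟩)
      simp only [hth1] at hlt
      linarith [hq1eq.symm.le, hq1eq.le]
    have hbB_false : ∀ z, th1 z < z i → pol (B z) ↑i.1 i.2 = false := by
      intro z hlt
      have hBrw : B z = argminTie (fun p => a1 z p +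
          z i * (if pol p ↑i.1 i.2 then 1 else 0)) := by
        rw [hB]
        simp only
        congr 1
        funext p
        simp only [ha1]
        ring
      rw [hBrw]
      obtain ⟨q0, hq0mem, hq0eq⟩ := Finset.exists_mem_eq_inf' hS0ne (a1 z)
      have hq0b : pol q0 ↑i.1 i.2 = false := by
        have := Finset.mem_filter.mp (hS0 ▸ hq0mem)
        exact this.2
      refine argminTie_bool_false (a1 z) (fun p => pol p ↑i.1 i.2) (z i) q0 hq0b ?_
      intro q1 hq1
      have h2 : S1.inf' hS1ne (a1 z) ≤ a1 z q1 :=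
        Finset.inf'_le _ (by rw [hS1]; exact Finset.mem_filter.mpr ⟨Finset.mem_univ _, hq1⟩)
      simp only [hth1] at hlt
      linarith [hq0eq.symm.le, hq0eq.le]
    have hbA_true : ∀ z, z i < th2 z → pol (A z) ↑i.1 i.2 = true := by
      intro z hlt
      have hArw : A z = argminTie (fun p => a2 z p +
          z i * (if pol p ↑i.1 i.2 then 1 else 0)) := by
        rw [hA]
        simp only
        congr 1
        funext p
        simp only [ha2]
        ring
      rw [hArw]
      obtain ⟨q1, hq1mem, hq1eq⟩ := Finset.exists_mem_eq_inf' hS1ne (a2 z)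
      have hq1b : pol q1 ↑i.1 i.2 = true := by
        have := Finset.mem_filter.mp (hS1 ▸ hq1mem)
        exact this.2
      refine argminTie_bool_true (a2 z) (fun p => pol p ↑i.1 i.2) (z i) q1 hq1b ?_
      intro q0 hq0
      have h2 : S0.inf' hS0ne (a2 z) ≤ a2 z q0 :=
        Finset.inf'_le _ (by rw [hS0]; exact Finset.mem_filter.mpr ⟨Finset.mem_univ _, hq0⟩)
      simp only [hth2] at hlt
      linarith [hq1eq.symm.le, hq1eq.le]
    have hbA_false : ∀ z, th2 z < z i → pol (A z) ↑i.1 i.2 = false := by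
      intro z hlt
      have hArw : A z = argminTie (fun p => a2 z p +
          z i * (if pol p ↑i.1 i.2 then 1 else 0)) := by
        rw [hA]
        simp only
        congr 1
        funext p
        simp only [ha2]
        ring
      rw [hArw]
      obtain ⟨q0, hq0mem, hq0eq⟩ := Finset.exists_mem_eq_inf' hS0ne (a2 z)
      have hq0b : pol q0 ↑i.1 i.2 = false := by
        have := Finset.mem_filter.mp (hS0 ▸ hq0mem)
        exact this.2
      refine argminTie_bool_false (a2 z) (fun p => pol p ↑i.1 i.2) (z i) q0 hq0b ?_
      intro q1 hq1
      have h2 : S1.inf' hS1ne (a2 z) ≤ a2 z q1 :=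
        Finset.inf'_le _ (by rw [hS1]; exact Finset.mem_filter.mpr ⟨Finset.mem_univ _, hq1⟩)
      simp only [hth2] at hlt
      linarith [hq0eq.symm.le, hq0eq.le]
    have hsub : ∀ z ∈ D i, z i ∈ Set.Icc (min (th1 z) (th2 z)) (max (th1 z) (th2 z)) := by
      intro z hz
      simp only [hD, Set.mem_setOf_eq] at hz
      rw [Set.mem_Icc]
      constructor
      · by_contra hcon
        push_neg at hcon
        rw [lt_min_iff] at hcon
        exact hz ((hbB_true z hcon.1).trans (hbA_true z hcon.2).symm)
      · by_contra hcon
        push_neg at hcon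
        rw [max_lt_iff] at hcon
        exact hz ((hbB_false z hcon.1).trans (hbA_false z hcon.2).symm)
    refine pi_measure_strip_bound (lapm ε) i (D i) (hDm i)
      (fun z => min (th1 z) (th2 z)) (fun z => max (th1 z) (th2 z))
      (fun z s => by rw [hth1u, hth2u])
      (fun z s => by rw [hth1u, hth2u])
      hsub (ENNReal.ofReal (ε * F)) ?_
    intro z
    refine le_trans (lapm_Icc_le hε _ _) (ENNReal.ofReal_le_ofReal ?_)
    have hmm : max (th1 z) (th2 z) - min (th1 z) (th2 z) = |th2 z - th1 z| :=
      max_sub_min_eq_abs _ _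
    have hdd := hthdiff z
    rw [hmm]
    nlinarith [abs_nonneg (th2 z - th1 z)]
  -- switch to the product measure
  have hμ : laplacePi ({x // x ∈ Xs} × Fin K) ε =
      Measure.pi (fun _ : {x // x ∈ Xs} × Fin K => lapm ε) := by
    haveI : ∀ i : {x // x ∈ Xs} × Fin K, SigmaFinite ((volume : Measure ℝ).withDensity
        fun x => ENNReal.ofReal (ε / 2 * Real.exp (-ε * |x|))) := fun _ => by
      rw [show ((volume : Measure ℝ).withDensity
        fun x => ENNReal.ofReal (ε / 2 * Real.exp (-ε * |x|))) = lapm ε from rfl]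
      infer_instance
    have hpi := pi_withDensity_eq (ι := {x // x ∈ Xs} × Fin K) (volume : Measure ℝ)
      (fun _ x => ENNReal.ofReal (ε / 2 * Real.exp (-ε * |x|)))
      (fun _ => lapm_density_measurable ε)
    rw [laplacePi, MeasureTheory.volume_pi]
    rw [show (Measure.pi fun _ : {x // x ∈ Xs} × Fin K => lapm ε) =
        (Measure.pi fun _ : {x // x ∈ Xs} × Fin K => (volume : Measure ℝ)).withDensity
          fun z => ∏ w : {x // x ∈ Xs} × Fin K,
            ENNReal.ofReal (ε / 2 * Real.exp (-ε * |z w|)) from hpi]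
    congr 1
    funext z
    rw [ENNReal.ofReal_prod_of_nonneg]
    intro w _
    positivity
  rw [hμ]
  set μ := Measure.pi (fun _ : {x // x ∈ Xs} × Fin K => lapm ε) with hμd
  haveI : IsProbabilityMeasure μ := by
    rw [hμd]
    infer_instance
  have hg_int : Integrable (fun z => f t (pol (B z) (xs t))) μ := by
    have hgdecomp : (fun z => f t (pol (B z) (xs t))) = fun z =>
        ∑ p : P, Set.indicator {z' | B z' = p} (fun _ => f t (pol p (xs t))) z := by
      funext z
      symm
      rw [Finset.sum_eq_single (B z)]
      · exact Set.indicator_of_mem (show z ∈ {z' | B z' = B z} from rfl) _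
      · intro q _ hq
        refine Set.indicator_of_notMem ?_ _
        simp only [Set.mem_setOf_eq]
        exact fun h => hq h.symm
      · intro h
        exact absurd (Finset.mem_univ _) h
    rw [hgdecomp]
    refine MeasureTheory.integrable_finset_sum _ fun p _ => ?_
    rw [MeasureTheory.integrable_indicator_iff (hmB p)]
    exact MeasureTheory.integrableOn_const (measure_ne_top _ _)
  have hh_int : Integrable (fun z => f t (pol (A z) (xs t))) μ := by
    have hhdecomp : (fun z => f t (pol (A z) (xs t))) = fun z =>
        ∑ p : P, Set.indicator {z' | A z' = p} (fun _ => f t (pol p (xs t))) z := by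
      funext z
      symm
      rw [Finset.sum_eq_single (A z)]
      · exact Set.indicator_of_mem (show z ∈ {z' | A z' = A z} from rfl) _
      · intro q _ hq
        refine Set.indicator_of_notMem ?_ _
        simp only [Set.mem_setOf_eq]
        exact fun h => hq h.symm
      · intro h
        exact absurd (Finset.mem_univ _) h
    rw [hhdecomp]
    refine MeasureTheory.integrable_finset_sum _ fun p _ => ?_
    rw [MeasureTheory.integrable_indicator_iff (hmA p)]
    exact MeasureTheory.integrableOn_const (measure_ne_top _ _)
  have hub_int : Integrable (fun z => ∑ i : {x // x ∈ Xs} × Fin K,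
      Set.indicator (D i) (fun _ => 2*F) z) μ := by
    refine MeasureTheory.integrable_finset_sum _ fun i _ => ?_
    rw [MeasureTheory.integrable_indicator_iff (hDm i)]
    exact MeasureTheory.integrableOn_const (measure_ne_top _ _)
  have hptw : ∀ z, f t (pol (B z) (xs t)) - f t (pol (A z) (xs t)) ≤
      ∑ i : {x // x ∈ Xs} × Fin K, Set.indicator (D i) (fun _ => 2*F) z := by
    intro z
    by_cases hBA : B z = A z
    · rw [hBA, sub_self]
      exact Finset.sum_nonneg fun i _ =>
        Set.indicator_nonneg (fun _ _ => by linarith) z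
    · obtain ⟨x, hx, hne⟩ := hsep (B z) (A z) hBA
      obtain ⟨j, hj⟩ := Function.ne_iff.mp hne
      have hzD : z ∈ D (⟨x, hx⟩, j) := hj
      have h1 : Set.indicator (D (⟨x, hx⟩, j)) (fun _ => 2*F) z = 2*F :=
        Set.indicator_of_mem hzD _
      have h2 : (2:ℝ)*F ≤ ∑ i : {x // x ∈ Xs} × Fin K,
          Set.indicator (D i) (fun _ => 2*F) z := by
        refine le_trans (le_of_eq h1.symm) ?_
        exact Finset.single_le_sum
          (f := fun i => Set.indicator (D i) (fun _ => 2*F) z)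
          (fun i _ => Set.indicator_nonneg (fun _ _ => by linarith) z)
          (Finset.mem_univ _)
      have h3 := abs_le.mp (hFb (pol (B z) (xs t)))
      have h4 := abs_le.mp (hFb (pol (A z) (xs t)))
      linarith
  have hfinal : (∫ z, (f t (pol (B z) (xs t)) - f t (pol (A z) (xs t))) ∂μ) ≤
      4 * ε * (K : ℝ) * (d : ℝ) * F ^ 2 := by
    calc (∫ z, (f t (pol (B z) (xs t)) - f t (pol (A z) (xs t))) ∂μ)
        ≤ ∫ z, (∑ i : {x // x ∈ Xs} × Fin K, Set.indicator (D i) (fun _ => 2*F) z) ∂μ :=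
          MeasureTheory.integral_mono (hg_int.sub hh_int) hub_int hptw
      _ = ∑ i : {x // x ∈ Xs} × Fin K, ∫ z, Set.indicator (D i) (fun _ => 2*F) z ∂μ :=
          MeasureTheory.integral_finset_sum _ (fun i _ => by
            rw [MeasureTheory.integrable_indicator_iff (hDm i)]
            exact MeasureTheory.integrableOn_const (measure_ne_top _ _))
      _ = ∑ i : {x // x ∈ Xs} × Fin K, (μ (D i)).toReal * (2*F) := by
          refine Finset.sum_congr rfl fun i _ => ?_
          rw [MeasureTheory.integral_indicator_const _ (hDm i)]
          rw [smul_eq_mul]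
          rfl
      _ ≤ ∑ _i : {x // x ∈ Xs} × Fin K, (ε*F) * (2*F) := by
          refine Finset.sum_le_sum fun i _ => ?_
          have h1 : (μ (D i)).toReal ≤ ε*F :=
            ENNReal.toReal_le_of_le_ofReal (by positivity) (hmeas_bound i)
          have h2 : (0:ℝ) ≤ 2*F := by linarith
          exact mul_le_mul_of_nonneg_right h1 h2
      _ = ((d * K : ℕ) : ℝ) * ((ε*F) * (2*F)) := by
          rw [Finset.sum_const, Finset.card_univ, Fintype.card_prod,
            Fintype.card_coe, Fintype.card_fin, hd, nsmul_eq_mul]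
      _ ≤ 4 * ε * (K : ℝ) * (d : ℝ) * F ^ 2 := by
          push_cast
          nlinarith [hε.le, hF0, sq_nonneg F,
            mul_nonneg (mul_nonneg hε.le (Nat.cast_nonneg K)) (Nat.cast_nonneg d),
            mul_nonneg (mul_nonneg (mul_nonneg hε.le (Nat.cast_nonneg K))
              (Nat.cast_nonneg d)) (mul_self_nonneg F)]
  exact hfinal
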